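/- The projections p (built from |ψ_1⟩, |ψ_2⟩) and p̃ (built from |ψ̃_1⟩ = (z^1, −μz̄^2, z^3, −z̄^4)^t, |ψ̃_2⟩ = (z^2, μz̄^1, z^4, z̄^3)^t) are unitarily equivalent in Mat_4(A(S^4_θ)): there is a diagonal unitary U ∈ Mat_4(A(S^4_θ)) with p̃ = U p U*. -/

import Mathlib

noncomputable section

/-- The deformation matrix λ'^{ij} of the sphere S^7_{θ'}: λ'^{12}=λ'^{34}=1 and
λ'^{13}=λ'^{14}=λ'^{23}=λ'^{24}=μ (indices 0-based), with λ'^{ji} = (λ'^{ij})⁻¹. -/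
def lam7 (μ : ℂ) (i j : Fin 4) : ℂ :=
  if ((i : ℕ) < 2 ∧ (j : ℕ) < 2) ∨ (2 ≤ (i : ℕ) ∧ 2 ≤ (j : ℕ)) then 1
  else if (i : ℕ) < 2 then μ else μ⁻¹

variable {A : Type} [Ring A] [Algebra ℂ A] [StarRing A] [StarModule ℂ A]

/-- The defining relations of A(S^7_{θ'}): commutation relations among the generators and
their adjoints, and the sphere relation Σ_i z^i z̄^i = 1. -/
def S7Rel (μ : ℂ) (z : Fin 4 → A) : Prop :=
  (∀ i j, z i * z j = lam7 μ i j • (z j * z i)) ∧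
  (∀ i j, star (z i) * z j = lam7 μ j i • (z j * star (z i))) ∧
  (∀ i j, star (z i) * star (z j) = lam7 μ i j • (star (z j) * star (z i))) ∧
  (∑ i, z i * star (z i)) = 1

/-- α = 2(z^1 z̄^3 + z^2 z̄^4). -/
def elA (z : Fin 4 → A) : A := 2 * (z 0 * star (z 2) + z 1 * star (z 3))

/-- β = 2(−z^1 z^4 + z^2 z^3). -/
def elB (z : Fin 4 → A) : A := 2 * (-(z 0 * z 3) + z 1 * z 2)

/-- x = z^1 z̄^1 + z^2 z̄^2 − z^3 z̄^3 − z^4 z̄^4. -/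
def elX (z : Fin 4 → A) : A :=
  z 0 * star (z 0) + z 1 * star (z 1) - z 2 * star (z 2) - z 3 * star (z 3)

/-- |ψ_1⟩ = (z^1, −z̄^2, z^3, −z̄^4)^t. -/
def psi1 (z : Fin 4 → A) : Fin 4 → A := ![z 0, -star (z 1), z 2, -star (z 3)]

/-- |ψ_2⟩ = (z^2, z̄^1, z^4, z̄^3)^t. -/
def psi2 (z : Fin 4 → A) : Fin 4 → A := ![z 1, star (z 0), z 3, star (z 2)]

/-- The projection p = |ψ_1⟩⟨ψ_1| + |ψ_2⟩⟨ψ_2| as a 4×4 matrix. -/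
def projP (z : Fin 4 → A) : Matrix (Fin 4) (Fin 4) A :=
  fun i j => psi1 z i * star (psi1 z j) + psi2 z i * star (psi2 z j)

/-- |ψ̃_1⟩ = (z^1, −μz̄^2, z^3, −z̄^4)^t. -/
def psit1 (μ : ℂ) (z : Fin 4 → A) : Fin 4 → A := ![z 0, -(μ • star (z 1)), z 2, -star (z 3)]

/-- |ψ̃_2⟩ = (z^2, μz̄^1, z^4, z̄^3)^t. -/
def psit2 (μ : ℂ) (z : Fin 4 → A) : Fin 4 → A := ![z 1, μ • star (z 0), z 3, star (z 2)]

/-- p̃ = |ψ̃_1⟩⟨ψ̃_1| + |ψ̃_2⟩⟨ψ̃_2|. -/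
def projPt (μ : ℂ) (z : Fin 4 → A) : Matrix (Fin 4) (Fin 4) A :=
  fun i j => psit1 μ z i * star (psit1 μ z j) + psit2 μ z i * star (psit2 μ z j)

/-- The projections p and p̃ are unitarily equivalent in Mat₄(A(S^4_θ)) via a
diagonal unitary U with entries in A(S^4_θ): p̃ = U p U*. -/
theorem stmt9 (θ : ℝ) (lam μ : ℂ) (hlam : lam = Complex.exp (2 * Real.pi * Complex.I * θ))
    (hμ : μ ^ 2 = lam) (z : Fin 4 → A) (hrel : S7Rel μ z) :
    ∃ d : Fin 4 → A,
      (∀ i, d i ∈ StarAlgebra.adjoin ℂ ({elA z, elB z, elX z} : Set A)) ∧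
      Matrix.diagonal d * star (Matrix.diagonal d) = 1 ∧
      star (Matrix.diagonal d) * Matrix.diagonal d = 1 ∧
      projPt μ z = Matrix.diagonal d * projP z * star (Matrix.diagonal d) := by
  have habs : μ * (starRingEnd ℂ) μ = 1 := by
    have h1 : ‖lam‖ = 1 := by
      rw [hlam, Complex.norm_exp]
      have : (2 * (Real.pi : ℂ) * Complex.I * (θ : ℂ)).re = 0 := by
        simp [Complex.mul_re, Complex.mul_im]
      rw [this, Real.exp_zero]
    have h2 : ‖μ‖ = 1 := by
      have h := congrArg Norm.norm hμ
      rw [norm_pow, h1] at h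
      nlinarith [norm_nonneg μ]
    rw [Complex.mul_conj, Complex.normSq_eq_norm_sq, h2]
    norm_num
  set aμ : A := algebraMap ℂ A μ with haμ
  have hstar : star aμ = algebraMap ℂ A ((starRingEnd ℂ) μ) := by
    rw [haμ, ← algebraMap_star_comm]; rfl
  have hmul1 : aμ * star aμ = 1 := by
    rw [hstar, haμ, ← map_mul, habs, map_one]
  have hmul2 : star aμ * aμ = 1 := by
    rw [hstar, haμ, ← map_mul, mul_comm, habs, map_one]
  refine ⟨![1, aμ, 1, 1], ?_, ?_, ?_, ?_⟩
  · intro i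
    fin_cases i
    · exact one_mem _
    · exact algebraMap_mem _ μ
    · exact one_mem _
    · exact one_mem _
  · rw [Matrix.star_eq_conjTranspose, Matrix.diagonal_conjTranspose,
      Matrix.diagonal_mul_diagonal]
    have : (fun i => ![(1 : A), aμ, 1, 1] i * (star ![(1 : A), aμ, 1, 1]) i)
        = fun _ => (1 : A) := by
      funext i; fin_cases i <;> simp [Pi.star_apply, hmul1]
    rw [this]
    exact Matrix.diagonal_one
  · rw [Matrix.star_eq_conjTranspose, Matrix.diagonal_conjTranspose,
      Matrix.diagonal_mul_diagonal]
    have : (fun i => (star ![(1 : A), aμ, 1, 1]) i * ![(1 : A), aμ, 1, 1] i)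
        = fun _ => (1 : A) := by
      funext i; fin_cases i <;> simp [Pi.star_apply, hmul2]
    rw [this]
    exact Matrix.diagonal_one
  · set c : Fin 4 → ℂ := ![1, μ, 1, 1] with hc
    have h1 : ∀ i, psit1 μ z i = c i • psi1 z i := by
      intro i; fin_cases i <;> simp [psit1, psi1, hc]
    have h2 : ∀ i, psit2 μ z i = c i • psi2 z i := by
      intro i; fin_cases i <;> simp [psit2, psi2, hc]
    have hd : ∀ i, (![1, aμ, 1, 1] : Fin 4 → A) i = algebraMap ℂ A (c i) := by
      intro i; fin_cases i <;> simp [hc, haμ]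
    funext i j
    have hentry : (Matrix.diagonal ![(1 : A), aμ, 1, 1] * projP z *
        star (Matrix.diagonal ![(1 : A), aμ, 1, 1])) i j =
        ![(1 : A), aμ, 1, 1] i * projP z i j * star (![(1 : A), aμ, 1, 1] j) := by
      rw [Matrix.star_eq_conjTranspose, Matrix.diagonal_conjTranspose,
        Matrix.mul_diagonal, Matrix.diagonal_mul]
      rfl
    have hsmr : ∀ (w : ℂ) (a : A), a * star (algebraMap ℂ A w) = (starRingEnd ℂ) w • a := by
      intro w a
      rw [← algebraMap_star_comm, ← Algebra.commutes, ← Algebra.smul_def]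
      rfl
    rw [hentry, hd i, hd j, ← Algebra.smul_def, smul_mul_assoc, hsmr]
    simp only [projPt, projP, h1, h2, star_smul, smul_mul_assoc, mul_smul_comm, smul_smul,
      smul_add]
    simp [Complex.star_def, mul_comm]
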